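/- Let X be a topological vector space and T a continuous linear operator on X whose extended backward shift kernel ker†T = span(⋃_{n≥1} (T^n(X) ∩ ker T^n)) is dense in X. Then I + T is topologically mixing. -/

import Mathlib

open Filter Finset Topology

namespace Stmt11

variable {𝕜 : Type*} [RCLike 𝕜]

noncomputable def Binf (𝕜 : Type*) [RCLike 𝕜] (m : ℕ) : Matrix (Fin m) (Fin m) 𝕜 :=
  Matrix.of fun r i => (((m + (r : ℕ) - (i : ℕ)).factorial : 𝕜))⁻¹

noncomputable def Bkm (𝕜 : Type*) [RCLike 𝕜] (m k : ℕ) : Matrix (Fin m) (Fin m) 𝕜 :=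
  Matrix.of fun r i =>
    (k.choose (m + (r : ℕ) - (i : ℕ)) : 𝕜) * ((k : 𝕜)⁻¹) ^ (m + (r : ℕ) - (i : ℕ))

lemma det_Binf_ne_zero (m : ℕ) : (Binf 𝕜 m).det ≠ 0 := by
  have hfac : ∀ r : Fin m, (((m + (r : ℕ)).factorial : 𝕜)) ≠ 0 := fun r =>
    Nat.cast_ne_zero.mpr (Nat.factorial_ne_zero _)
  have hB : Binf 𝕜 m =
      Matrix.diagonal (fun r : Fin m => (((m + (r : ℕ)).factorial : 𝕜))⁻¹) *
      Matrix.of (fun r i : Fin m =>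
        ((descPochhammer 𝕜 (i : ℕ)).eval (((m + (r : ℕ) : ℕ) : 𝕜)))) := by
    ext r i
    rw [Matrix.diagonal_mul, Matrix.of_apply, descPochhammer_eval_eq_descFactorial]
    have hle : (i : ℕ) ≤ m + (r : ℕ) := le_trans (le_of_lt i.2) (Nat.le_add_right _ _)
    have h := Nat.factorial_mul_descFactorial hle
    have hcast : (((m + (r:ℕ) - (i:ℕ)).factorial : 𝕜)) * (((m + (r:ℕ)).descFactorial (i:ℕ) : 𝕜))
        = (((m + (r:ℕ)).factorial : 𝕜)) := by exact_mod_cast congrArg (Nat.cast (R := 𝕜)) h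
    have h1 : (((m + (r:ℕ) - (i:ℕ)).factorial : 𝕜)) ≠ 0 :=
      Nat.cast_ne_zero.mpr (Nat.factorial_ne_zero _)
    rw [Binf, Matrix.of_apply]
    rw [inv_eq_one_div, inv_eq_one_div, div_mul_eq_mul_div, div_eq_div_iff h1 (hfac r)]
    linear_combination -hcast
  rw [hB, Matrix.det_mul, Matrix.det_diagonal]
  apply mul_ne_zero
  · exact Finset.prod_ne_zero_iff.mpr fun r _ => inv_ne_zero (hfac r)
  · rw [← Matrix.det_eval_matrixOfPolynomials_eq_det_vandermonde
        (fun r : Fin m => (((m + (r : ℕ) : ℕ)) : 𝕜)) (fun i => descPochhammer 𝕜 (i : ℕ))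
        (fun i => descPochhammer_natDegree 𝕜 (i : ℕ))
        (fun i => monic_descPochhammer 𝕜 (i : ℕ))]
    refine Matrix.det_vandermonde_ne_zero_iff.mpr ?_
    intro r r' h
    have : ((m + (r : ℕ) : ℕ) : 𝕜) = ((m + (r' : ℕ) : ℕ) : 𝕜) := h
    have h2 : m + (r : ℕ) = m + (r' : ℕ) := Nat.cast_injective this
    exact Fin.ext (Nat.add_left_cancel h2)

lemma tendsto_inv_nat : Tendsto (fun k : ℕ => ((k : 𝕜))⁻¹) atTop (𝓝 0) :=
  tendsto_inv_atTop_nhds_zero_nat (𝕜 := 𝕜)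

lemma tendsto_inv_nat_pow {d : ℕ} (hd : d ≠ 0) :
    Tendsto (fun k : ℕ => ((k : 𝕜))⁻¹ ^ d) atTop (𝓝 0) := by
  have := (tendsto_inv_nat (𝕜 := 𝕜)).pow d
  simpa [zero_pow hd] using this

lemma tendsto_choose_mul (j : ℕ) :
    Tendsto (fun k : ℕ => (k.choose j : 𝕜) * ((k : 𝕜))⁻¹ ^ j) atTop
      (𝓝 ((j.factorial : 𝕜))⁻¹) := by
  induction j with
  | zero => simpa using (tendsto_const_nhds : Tendsto (fun _ : ℕ => (1:𝕜)) atTop _)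
  | succ j ih =>
    have hlim : Tendsto (fun k : ℕ =>
        ((k.choose j : 𝕜) * ((k:𝕜))⁻¹ ^ j) * (((1:𝕜) - (j:𝕜) * ((k:𝕜))⁻¹) * (((j:𝕜)+1))⁻¹))
        atTop (𝓝 (((j.factorial : 𝕜))⁻¹ * (((1:𝕜) - (j:𝕜) * 0) * (((j:𝕜)+1))⁻¹))) :=
      ih.mul ((tendsto_const_nhds.sub (tendsto_const_nhds.mul tendsto_inv_nat)).mul
        tendsto_const_nhds)
    have hj1 : ((j : 𝕜) + 1) ≠ 0 := by
      exact_mod_cast (Nat.cast_ne_zero (R := 𝕜)).mpr (Nat.succ_ne_zero j)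
    have heq : ∀ᶠ k : ℕ in atTop,
        ((k.choose j : 𝕜) * ((k:𝕜))⁻¹ ^ j) * (((1:𝕜) - (j:𝕜) * ((k:𝕜))⁻¹) * (((j:𝕜)+1))⁻¹)
          = (k.choose (j+1) : 𝕜) * ((k:𝕜))⁻¹ ^ (j+1) := by
      filter_upwards [eventually_ge_atTop (j+1)] with k hk
      have hkpos : 0 < k := lt_of_lt_of_le (Nat.succ_pos j) hk
      have hk0 : (k : 𝕜) ≠ 0 := Nat.cast_ne_zero.mpr hkpos.ne'
      have hjk : j ≤ k := le_trans (Nat.le_succ j) hk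
      have hnat := Nat.choose_succ_right_eq k j
      have hcast : (k.choose (j+1) : 𝕜) * ((j:𝕜)+1) = (k.choose j : 𝕜) * ((k:𝕜) - (j:𝕜)) := by
        have h := congrArg (Nat.cast (R := 𝕜)) hnat
        push_cast [Nat.cast_sub hjk] at h
        exact h
      have h1 : (1 : 𝕜) - (j:𝕜) * ((k:𝕜))⁻¹ = ((k:𝕜) - (j:𝕜)) * ((k:𝕜))⁻¹ := by
        field_simp
      have hC' : (k.choose (j+1) : 𝕜)
          = (k.choose j : 𝕜) * ((k:𝕜) - (j:𝕜)) * (((j:𝕜)+1))⁻¹ := by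
        field_simp
        linear_combination hcast
      rw [h1, hC', pow_succ]
      ring
    have hval : ((j.factorial : 𝕜))⁻¹ * (((1:𝕜) - (j:𝕜) * 0) * (((j:𝕜)+1))⁻¹)
        = (((j+1).factorial : 𝕜))⁻¹ := by
      rw [Nat.factorial_succ]
      push_cast
      rw [mul_zero, sub_zero, one_mul, mul_inv]
      ring
    rw [← hval]
    exact hlim.congr' heq

lemma tendsto_Bkm (m : ℕ) :
    Tendsto (fun k => Bkm 𝕜 m k) atTop (𝓝 (Binf 𝕜 m)) := by
  refine tendsto_pi_nhds.mpr ?_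
  intro r
  rw [tendsto_pi_nhds]
  intro i
  exact tendsto_choose_mul _

lemma tendsto_Bkm_inv (m : ℕ) :
    Tendsto (fun k => (Bkm 𝕜 m k)⁻¹) atTop (𝓝 ((Binf 𝕜 m)⁻¹)) := by
  have hc : ContinuousAt Inv.inv (Binf 𝕜 m) := by
    apply continuousAt_matrix_inv
    rw [Ring.inverse_eq_inv']
    exact continuousAt_inv₀ (det_Binf_ne_zero m)
  exact hc.tendsto.comp (tendsto_Bkm m)

lemma eventually_isUnit_Bkm (m : ℕ) :
    ∀ᶠ k : ℕ in atTop, IsUnit (Bkm 𝕜 m k).det := by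
  have hdet : Tendsto (fun k => (Bkm 𝕜 m k).det) atTop (𝓝 ((Binf 𝕜 m).det)) :=
    (continuous_id.matrix_det.continuousAt).tendsto.comp (tendsto_Bkm m)
  filter_upwards [hdet.eventually_ne (det_Binf_ne_zero m)] with k hk
  exact isUnit_iff_ne_zero.mpr hk

variable {X : Type*} [AddCommGroup X] [Module 𝕜 X] [TopologicalSpace X]
  [IsTopologicalAddGroup X] [ContinuousSMul 𝕜 X]

lemma pow_apply_chain (T : X →L[𝕜] X) {m : ℕ} {y : X} (hy : (T ^ (2*m)) y = 0)
    {i : ℕ} (hi : i ≤ 2*m) {k : ℕ} (hk : 2*m ≤ k) :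
    ((1 + T) ^ k) ((T ^ i) y) =
      ∑ j ∈ range (2*m - i), (k.choose j : 𝕜) • ((T ^ (i + j)) y) := by
  have hzero : ∀ l, 2*m ≤ l → (T ^ l) y = 0 := by
    intro l hl
    have h : T ^ l = T ^ (l - 2*m) * T ^ (2*m) := by
      rw [← pow_add]; congr 1; omega
    rw [h, ContinuousLinearMap.mul_apply, hy, map_zero]
  have hpow : (1 + T) ^ k = ∑ j ∈ range (k+1), (k.choose j : ℕ) • T ^ j := by
    rw [add_comm]
    rw [(Commute.one_right T).add_pow]
    refine Finset.sum_congr rfl fun j _ => ?_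
    rw [one_pow, mul_one, nsmul_eq_mul]
    exact (Nat.cast_commute (k.choose j) (T ^ j)).eq.symm
  have happ : ((1 + T) ^ k) ((T ^ i) y)
      = ∑ j ∈ range (k+1), (k.choose j : 𝕜) • ((T ^ (i + j)) y) := by
    rw [hpow, ContinuousLinearMap.sum_apply]
    refine Finset.sum_congr rfl fun j _ => ?_
    rw [ContinuousLinearMap.smul_apply]
    rw [← Nat.cast_smul_eq_nsmul 𝕜]
    congr 1
    rw [← ContinuousLinearMap.mul_apply, ← pow_add, add_comm j i]
  rw [happ]
  symm
  apply Finset.sum_subset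
  · intro j hj
    rw [Finset.mem_range] at *
    omega
  · intro j hj hnj
    rw [Finset.mem_range] at hnj
    have : 2*m ≤ i + j := by omega
    rw [hzero _ this, smul_zero]

lemma key_sum (T : X →L[𝕜] X) {m : ℕ} {y : X} (hy : (T ^ (2*m)) y = 0)
    (c : ℕ → 𝕜) {k : ℕ} (hk : 2*m ≤ k) :
    ((1 + T) ^ k) (∑ i ∈ range m, c i • ((T ^ i) y)) =
      ∑ l ∈ range (2*m),
        (∑ i ∈ range m, if i ≤ l then c i * (k.choose (l - i) : 𝕜) else 0) • ((T ^ l) y) := by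
  have hreidx : ∀ i, i < m →
      (∑ j ∈ range (2*m - i), (k.choose j : 𝕜) • ((T ^ (i + j)) y))
        = ∑ l ∈ range (2*m), (if i ≤ l then (k.choose (l - i) : 𝕜) else 0) • ((T ^ l) y) := by
    intro i him
    have hfilt : Finset.filter (fun l => i ≤ l) (range (2*m)) = Finset.Ico i (2*m) := by
      ext l
      simp only [Finset.mem_filter, Finset.mem_range, Finset.mem_Ico]
      omega
    symm
    calc ∑ l ∈ range (2*m), (if i ≤ l then (k.choose (l - i) : 𝕜) else 0) • ((T ^ l) y)
        = ∑ l ∈ range (2*m),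
            (if i ≤ l then (k.choose (l - i) : 𝕜) • ((T ^ l) y) else 0) := by
          refine Finset.sum_congr rfl fun l _ => ?_
          rw [ite_smul, zero_smul]
      _ = ∑ l ∈ Finset.filter (fun l => i ≤ l) (range (2*m)),
            (k.choose (l - i) : 𝕜) • ((T ^ l) y) := (Finset.sum_filter _ _).symm
      _ = ∑ l ∈ Finset.Ico i (2*m), (k.choose (l - i) : 𝕜) • ((T ^ l) y) := by rw [hfilt]
      _ = ∑ j ∈ range (2*m - i), (k.choose (i + j - i) : 𝕜) • ((T ^ (i + j)) y) :=
          Finset.sum_Ico_eq_sum_range _ _ _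
      _ = ∑ j ∈ range (2*m - i), (k.choose j : 𝕜) • ((T ^ (i + j)) y) := by
          simp only [Nat.add_sub_cancel_left]
  have step1 : ∀ i ∈ range m,
      ((1 + T) ^ k) (c i • ((T ^ i) y))
        = ∑ l ∈ range (2*m),
            (if i ≤ l then c i * (k.choose (l - i) : 𝕜) else 0) • ((T ^ l) y) := by
    intro i hi
    have him : i < m := Finset.mem_range.mp hi
    have h2m : i ≤ 2*m := by omega
    rw [map_smul, pow_apply_chain T hy h2m hk, hreidx i him, Finset.smul_sum]
    refine Finset.sum_congr rfl fun l _ => ?_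
    rw [smul_smul, mul_ite, mul_zero]
  rw [map_sum, Finset.sum_congr rfl step1, Finset.sum_comm]
  exact Finset.sum_congr rfl fun l _ => (Finset.sum_smul).symm

lemma master (T : X →L[𝕜] X) {m : ℕ} (hm : 1 ≤ m) {y : X} (hy : (T ^ (2*m)) y = 0)
    {v : ℕ → Fin m → 𝕜} {vinf : Fin m → 𝕜} (hv : Tendsto v atTop (𝓝 vinf)) :
    ∃ (s : ℕ → X) (low : ℕ → ℕ → 𝕜),
      Tendsto s atTop (𝓝 0) ∧ (∀ l, l < m → Tendsto (low l) atTop (𝓝 0)) ∧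
      ∀ᶠ k : ℕ in atTop, ((1 + T) ^ k) (s k) =
        (∑ l ∈ range m, low l k • ((T ^ l) y)) +
          ∑ r : Fin m, ((k : 𝕜) ^ (r : ℕ) * v k r) • ((T ^ (m + (r : ℕ))) y) := by
  classical
  set γ : ℕ → Fin m → 𝕜 := fun k => ((Bkm 𝕜 m k)⁻¹).mulVec (v k) with hγdef
  set c : ℕ → ℕ → 𝕜 :=
    fun k i => if h : i < m then γ k ⟨i, h⟩ * ((k:𝕜))⁻¹ ^ (m - i) else 0 with hcdef
  have hγ : ∀ r : Fin m,
      Tendsto (fun k => γ k r) atTop (𝓝 (((Binf 𝕜 m)⁻¹).mulVec vinf r)) := by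
    intro r
    have hentry : ∀ i, Tendsto (fun k => ((Bkm 𝕜 m k)⁻¹) r i) atTop
        (𝓝 (((Binf 𝕜 m)⁻¹) r i)) :=
      fun i => tendsto_pi_nhds.mp (tendsto_pi_nhds.mp (tendsto_Bkm_inv m) r) i
    have hvent : ∀ i, Tendsto (fun k => v k i) atTop (𝓝 (vinf i)) :=
      fun i => tendsto_pi_nhds.mp hv i
    simp only [hγdef, Matrix.mulVec, dotProduct]
    exact tendsto_finset_sum _ fun i _ => (hentry i).mul (hvent i)
  have hc : ∀ i, i < m → Tendsto (fun k => c k i) atTop (𝓝 0) := by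
    intro i hi
    simp only [hcdef, dif_pos hi]
    have h := (hγ ⟨i, hi⟩).mul (tendsto_inv_nat_pow (𝕜 := 𝕜) (d := m - i) (by omega))
    simpa using h
  refine ⟨fun k => ∑ i ∈ range m, c k i • ((T ^ i) y),
    fun l k => ∑ i ∈ range m, if i ≤ l then c k i * (k.choose (l - i) : 𝕜) else 0,
    ?_, ?_, ?_⟩
  · have h := tendsto_finset_sum (range m)
      (fun i (hi : i ∈ range m) => (hc i (Finset.mem_range.mp hi)).smul_const ((T ^ i) y))
    simpa using h
  · intro l hl
    have h : Tendsto (fun k => ∑ i ∈ range m,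
        if i ≤ l then c k i * (k.choose (l - i) : 𝕜) else 0) atTop
        (𝓝 (∑ _i ∈ range m, (0:𝕜))) := by
      refine tendsto_finset_sum _ fun i hi => ?_
      by_cases hil : i ≤ l
      · simp only [if_pos hil]
        have him : i < m := Finset.mem_range.mp hi
        have hsplit : ∀ k : ℕ, c k i * (k.choose (l - i) : 𝕜)
            = γ k ⟨i, him⟩ * ((k.choose (l - i) : 𝕜) * ((k:𝕜))⁻¹ ^ (l - i))
                * ((k:𝕜))⁻¹ ^ (m - l) := by
          intro k
          simp only [hcdef, dif_pos him]
          rw [show m - i = (l - i) + (m - l) by omega, pow_add]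
          ring
        have hlim := ((hγ ⟨i, him⟩).mul (tendsto_choose_mul (𝕜 := 𝕜) (l - i))).mul
          (tendsto_inv_nat_pow (𝕜 := 𝕜) (d := m - l) (by omega))
        rw [mul_zero] at hlim
        exact hlim.congr fun k => (hsplit k).symm
      · simp only [if_neg hil]
        exact tendsto_const_nhds
    simpa using h
  · filter_upwards [eventually_ge_atTop (2*m), eventually_isUnit_Bkm (𝕜 := 𝕜) m,
      eventually_ge_atTop 1] with k hk2m hunit hk1
    have hk0 : (k : 𝕜) ≠ 0 := Nat.cast_ne_zero.mpr (by omega)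
    rw [key_sum T hy (c k) hk2m]
    rw [← Finset.sum_range_add_sum_Ico _ (show m ≤ 2*m by omega)]
    congr 1
    rw [Finset.sum_Ico_eq_sum_range, show 2*m - m = m by omega,
      ← Fin.sum_univ_eq_sum_range (fun j =>
        (∑ i ∈ range m, if i ≤ m + j then c k i * (k.choose (m + j - i) : 𝕜) else 0)
          • ((T ^ (m + j)) y)) m]
    refine Finset.sum_congr rfl fun r _ => ?_
    congr 1
    have hmul : (Bkm 𝕜 m k).mulVec (γ k) = v k := by
      rw [hγdef, Matrix.mulVec_mulVec, Matrix.mul_nonsing_inv _ hunit, Matrix.one_mulVec]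
    have h1 : (k:𝕜) ^ (r:ℕ) * ((k:𝕜))⁻¹ ^ (r:ℕ) = 1 := by
      rw [← mul_pow, mul_inv_cancel₀ hk0, one_pow]
    calc (∑ i ∈ range m, if i ≤ m + (r:ℕ) then c k i * (k.choose (m + (r:ℕ) - i) : 𝕜) else 0)
        = ∑ i : Fin m, (if (i:ℕ) ≤ m + (r:ℕ) then
            c k (i:ℕ) * (k.choose (m + (r:ℕ) - (i:ℕ)) : 𝕜) else 0) :=
          (Fin.sum_univ_eq_sum_range _ m).symm
      _ = ∑ i : Fin m, (k:𝕜) ^ (r:ℕ) * ((Bkm 𝕜 m k) r i * γ k i) := by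
          refine Finset.sum_congr rfl fun i _ => ?_
          have him : (i:ℕ) < m := i.2
          rw [if_pos (by omega : (i:ℕ) ≤ m + (r:ℕ))]
          simp only [hcdef, dif_pos him, Fin.eta]
          show γ k i * ((k:𝕜))⁻¹ ^ (m - (i:ℕ)) * (k.choose (m + (r:ℕ) - (i:ℕ)) : 𝕜)
            = (k:𝕜) ^ (r:ℕ) * ((k.choose (m + (r:ℕ) - (i:ℕ)) : 𝕜)
                * ((k:𝕜))⁻¹ ^ (m + (r:ℕ) - (i:ℕ)) * γ k i)
          rw [show m + (r:ℕ) - (i:ℕ) = (m - (i:ℕ)) + (r:ℕ) by omega, pow_add]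
          linear_combination (-(γ k i * ((k.choose ((m - (i:ℕ)) + (r:ℕ))) : 𝕜)
            * ((k:𝕜))⁻¹ ^ (m - (i:ℕ)))) * h1
      _ = (k:𝕜) ^ (r:ℕ) * ((Bkm 𝕜 m k).mulVec (γ k) r) := by
          rw [← Finset.mul_sum]
          rfl
      _ = (k:𝕜) ^ (r:ℕ) * v k r := by rw [hmul]

lemma P_two (T : X →L[𝕜] X) {m : ℕ} (hm : 1 ≤ m) {y : X} (hy : (T ^ (2*m)) y = 0) :
    ∃ b : ℕ → X, Tendsto b atTop (𝓝 0) ∧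
      Tendsto (fun k => (((1 + T) ^ k : X →L[𝕜] X)) (b k)) atTop (𝓝 ((T ^ m) y)) := by
  classical
  set e0 : Fin m → 𝕜 := fun r => if r = ⟨0, hm⟩ then 1 else 0 with he0
  obtain ⟨s, low, hs, hlow, hev⟩ := master T hm hy
    (v := fun _ => e0) (vinf := e0) tendsto_const_nhds
  refine ⟨s, hs, ?_⟩
  have hhigh : ∀ k : ℕ,
      (∑ r : Fin m, ((k : 𝕜) ^ (r : ℕ) * e0 r) • ((T ^ (m + (r : ℕ))) y)) = (T ^ m) y := by
    intro k
    rw [Finset.sum_eq_single (⟨0, hm⟩ : Fin m)]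
    · simp [he0]
    · intro r _ hr
      simp [he0, if_neg hr]
    · intro h
      exact absurd (Finset.mem_univ _) h
  have hg : Tendsto (fun k => (∑ l ∈ range m, low l k • ((T ^ l) y)) + (T ^ m) y) atTop
      (𝓝 ((T ^ m) y)) := by
    have h0 : Tendsto (fun k => ∑ l ∈ range m, low l k • ((T ^ l) y)) atTop (𝓝 0) := by
      have h := tendsto_finset_sum (range m) (fun l (hl : l ∈ range m) =>
        (hlow l (Finset.mem_range.mp hl)).smul_const ((T ^ l) y))
      simpa using h
    simpa using h0.add (tendsto_const_nhds (x := (T ^ m) y))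
  refine hg.congr' ?_
  filter_upwards [hev] with k hk
  rw [hk, hhigh k]

lemma P_one (T : X →L[𝕜] X) {m : ℕ} (hm : 1 ≤ m) {y : X} (hy : (T ^ (2*m)) y = 0) :
    ∃ a : ℕ → X, Tendsto a atTop (𝓝 ((T ^ m) y)) ∧
      Tendsto (fun k => (((1 + T) ^ k : X →L[𝕜] X)) (a k)) atTop (𝓝 0) := by
  classical
  set v : ℕ → Fin m → 𝕜 :=
    fun k r => -((k.choose (r : ℕ) : 𝕜) * ((k:𝕜))⁻¹ ^ (r : ℕ)) with hvdef
  have hv : Tendsto v atTop (𝓝 (fun r : Fin m => -((((r:ℕ)).factorial : 𝕜))⁻¹)) := by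
    rw [tendsto_pi_nhds]
    intro r
    exact (tendsto_choose_mul (𝕜 := 𝕜) (r : ℕ)).neg
  obtain ⟨s, low, hs, hlow, hev⟩ := master T hm hy hv
  refine ⟨fun k => (T ^ m) y + s k, by simpa using (tendsto_const_nhds (x := (T ^ m) y)).add hs, ?_⟩
  have h0 : Tendsto (fun k => ∑ l ∈ range m, low l k • ((T ^ l) y)) atTop (𝓝 0) := by
    have h := tendsto_finset_sum (range m) (fun l (hl : l ∈ range m) =>
      (hlow l (Finset.mem_range.mp hl)).smul_const ((T ^ l) y))
    simpa using h
  refine h0.congr' ?_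
  filter_upwards [hev, eventually_ge_atTop (2*m), eventually_ge_atTop 1] with k hk hk2m hk1
  have hk0 : (k : 𝕜) ≠ 0 := Nat.cast_ne_zero.mpr (by omega)
  have hA : ((1 + T) ^ k) ((T ^ m) y)
      = ∑ j ∈ range m, (k.choose j : 𝕜) • ((T ^ (m + j)) y) := by
    have h := pow_apply_chain T hy (show m ≤ 2*m by omega) hk2m
    rw [h, show 2*m - m = m by omega]
  have hAfin : ((1 + T) ^ k) ((T ^ m) y)
      = ∑ r : Fin m, (k.choose (r:ℕ) : 𝕜) • ((T ^ (m + (r:ℕ))) y) := by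
    rw [hA, ← Fin.sum_univ_eq_sum_range (fun j => (k.choose j : 𝕜) • ((T ^ (m + j)) y)) m]
  have hcancel : (∑ r : Fin m, (k.choose (r:ℕ) : 𝕜) • ((T ^ (m + (r:ℕ))) y))
      + ∑ r : Fin m, ((k : 𝕜) ^ (r : ℕ) * v k r) • ((T ^ (m + (r : ℕ))) y) = 0 := by
    rw [← Finset.sum_add_distrib]
    refine Finset.sum_eq_zero fun r _ => ?_
    rw [← add_smul]
    have h1 : (k:𝕜) ^ (r:ℕ) * ((k:𝕜))⁻¹ ^ (r:ℕ) = 1 := by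
      rw [← mul_pow, mul_inv_cancel₀ hk0, one_pow]
    have hz : (k.choose (r:ℕ) : 𝕜) + (k : 𝕜) ^ (r : ℕ) * v k r = 0 := by
      simp only [hvdef]
      linear_combination (-(k.choose (r:ℕ) : 𝕜)) * h1
    rw [hz, zero_smul]
  show ∑ l ∈ range m, low l k • ((T ^ l) y) = ((1 + T) ^ k) ((T ^ m) y + s k)
  rw [map_add, hk, hAfin]
  rw [show ∀ A B C : X, A + (B + C) = B + (A + C) from fun A B C => by abel]
  rw [hcancel, add_zero]

end Stmt11

open Filter Topology Stmt11 in
/-- Let `X` be a topological vector space and `T` a continuous linear operator on `X`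
whose extended backward shift kernel `ker† T = span(⋃_{n≥1} (T^n(X) ∩ ker T^n))` is
dense in `X`. Then `I + T` is topologically mixing. -/
theorem stmt_11 (𝕜 : Type*) [RCLike 𝕜] (X : Type*) [AddCommGroup X] [Module 𝕜 X]
    [TopologicalSpace X] [IsTopologicalAddGroup X] [ContinuousSMul 𝕜 X]
    (T : X →L[𝕜] X)
    (hker : Dense ((Submodule.span 𝕜
        (⋃ n : ℕ, (Set.range ⇑(T ^ (n + 1)) ∩ (LinearMap.ker ((T ^ (n + 1) : X →L[𝕜] X) : X →ₗ[𝕜] X) : Set X))) :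
          Submodule 𝕜 X) : Set X)) :
    ∀ U V : Set X, IsOpen U → IsOpen V → U.Nonempty → V.Nonempty →
      ∃ N : ℕ, ∀ k : ℕ, N ≤ k → (⇑((1 + T) ^ k) '' U ∩ V).Nonempty := by
  intro U V hU hV hUne hVne
  -- the set of points with both approximation properties is a submodule
  let P : Submodule 𝕜 X :=
    { carrier := {x | (∃ a : ℕ → X, Tendsto a atTop (𝓝 x) ∧
          Tendsto (fun k => (((1 + T) ^ k : X →L[𝕜] X)) (a k)) atTop (𝓝 0)) ∧
        (∃ b : ℕ → X, Tendsto b atTop (𝓝 0) ∧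
          Tendsto (fun k => (((1 + T) ^ k : X →L[𝕜] X)) (b k)) atTop (𝓝 x))}
      zero_mem' := by
        refine ⟨⟨fun _ => 0, tendsto_const_nhds, ?_⟩, ⟨fun _ => 0, tendsto_const_nhds, ?_⟩⟩ <;>
          · simp only [map_zero]
            exact tendsto_const_nhds
      add_mem' := by
        rintro x z ⟨⟨a, ha1, ha2⟩, ⟨b, hb1, hb2⟩⟩ ⟨⟨a', ha1', ha2'⟩, ⟨b', hb1', hb2'⟩⟩
        refine ⟨⟨fun k => a k + a' k, ha1.add ha1', ?_⟩,
          ⟨fun k => b k + b' k, by simpa using hb1.add hb1', ?_⟩⟩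
        · simp only [map_add]
          simpa using ha2.add ha2'
        · simp only [map_add]
          exact hb2.add hb2'
      smul_mem' := by
        rintro t x ⟨⟨a, ha1, ha2⟩, ⟨b, hb1, hb2⟩⟩
        refine ⟨⟨fun k => t • a k, ha1.const_smul t, ?_⟩,
          ⟨fun k => t • b k, by simpa using hb1.const_smul t, ?_⟩⟩
        · simp only [map_smul]
          simpa using ha2.const_smul t
        · simp only [map_smul]
          exact hb2.const_smul t }
  have hspan : Submodule.span 𝕜
      (⋃ n : ℕ, (Set.range ⇑(T ^ (n + 1)) ∩ (LinearMap.ker ((T ^ (n + 1) : X →L[𝕜] X) : X →ₗ[𝕜] X) : Set X))) ≤ P := by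
    rw [Submodule.span_le]
    rintro x hx
    obtain ⟨n, hxn⟩ := Set.mem_iUnion.mp hx
    obtain ⟨⟨y, hyx⟩, hxker⟩ := hxn
    set m := n + 1 with hmdef
    have hm : 1 ≤ m := Nat.le_add_left 1 n
    have hxker' : (T ^ m) x = 0 := hxker
    have hy2m : (T ^ (2*m)) y = 0 := by
      have : T ^ (2*m) = T ^ m * T ^ m := by rw [← pow_add]; congr 1; omega
      rw [this, ContinuousLinearMap.mul_apply, hyx, hxker']
    have hxeq : (T ^ m) y = x := hyx
    obtain ⟨a, ha1, ha2⟩ := P_one T hm hy2m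
    obtain ⟨b, hb1, hb2⟩ := P_two T hm hy2m
    exact ⟨⟨a, hxeq ▸ ha1, ha2⟩, ⟨b, hb1, hxeq ▸ hb2⟩⟩
  obtain ⟨u, huD, huU⟩ := hker.exists_mem_open hU hUne
  obtain ⟨v, hvD, hvV⟩ := hker.exists_mem_open hV hVne
  obtain ⟨⟨a, ha1, ha2⟩, -⟩ := hspan huD
  obtain ⟨-, ⟨b, hb1, hb2⟩⟩ := hspan hvD
  have hw1 : Tendsto (fun k => a k + b k) atTop (𝓝 u) := by simpa using ha1.add hb1
  have hw2 : Tendsto (fun k => (((1 + T) ^ k : X →L[𝕜] X)) (a k + b k)) atTop (𝓝 v) := by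
    have := ha2.add hb2
    simp only [← map_add] at this
    simpa using this
  have hUev : ∀ᶠ k : ℕ in atTop, a k + b k ∈ U := hw1.eventually (hU.eventually_mem huU)
  have hVev : ∀ᶠ k : ℕ in atTop, (((1 + T) ^ k : X →L[𝕜] X)) (a k + b k) ∈ V :=
    hw2.eventually (hV.eventually_mem hvV)
  obtain ⟨N, hN⟩ := eventually_atTop.mp (hUev.and hVev)
  exact ⟨N, fun k hk =>
    ⟨((1 + T) ^ k) (a k + b k), ⟨a k + b k, (hN k hk).1, rfl⟩, (hN k hk).2⟩⟩
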